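/- The Weierstrass function W(t) = ∑_{n=1}^∞ cos(4ⁿ t)/2ⁿ satisfies the uniform Hölder estimate |W(t+h) − W(t)| ≤ C |h|^{1/2} for all t ∈ ℝ and |h| ≤ 1, for some absolute constant C. -/

import Mathlib

open Real

noncomputable def W (t : ℝ) : ℝ :=
  ∑' n : ℕ, Real.cos ((4 : ℝ) ^ (n + 1) * t) / 2 ^ (n + 1)

lemma summable_W (t : ℝ) :
    Summable (fun n : ℕ => Real.cos ((4 : ℝ) ^ (n + 1) * t) / 2 ^ (n + 1)) := by
  apply Summable.of_norm_bounded (g := fun n : ℕ => (1/2 : ℝ) ^ n)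
  · exact summable_geometric_of_lt_one (by norm_num) (by norm_num)
  · intro n
    rw [Real.norm_eq_abs, abs_div, abs_of_pos (pow_pos (by norm_num : (0:ℝ) < 2) _),
      div_pow, one_pow]
    gcongr
    · exact Real.abs_cos_le_one _
    · norm_num
    · exact Nat.le_succ n

lemma abs_cos_sub_cos_le (x y : ℝ) : |Real.cos x - Real.cos y| ≤ |x - y| := by
  rw [Real.cos_sub_cos, abs_mul, abs_mul, abs_neg, abs_two]
  have h1 := Real.abs_sin_le_one ((x+y)/2)
  have h2 : |Real.sin ((x-y)/2)| ≤ |(x-y)/2| := Real.abs_sin_le_abs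
  have h3 := abs_nonneg (Real.sin ((x-y)/2))
  have h4 := abs_nonneg (Real.sin ((x+y)/2))
  have h5 := abs_nonneg ((x-y)/2)
  calc 2 * |Real.sin ((x+y)/2)| * |Real.sin ((x-y)/2)| ≤ 2 * 1 * |(x-y)/2| := by nlinarith
    _ = |x - y| := by rw [abs_div, abs_two]; ring

lemma aux_pow_sum (m : ℕ) : ∑ i ∈ Finset.range m, (2:ℝ)^(i+1) ≤ 2^(m+1) := by
  induction m with
  | zero => simp
  | succ n ih =>
      rw [Finset.sum_range_succ]
      have h4 : (2:ℝ)^(n+1+1) = 2^(n+1) + 2^(n+1) := by ring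
      linarith

/-- The Weierstrass function satisfies the uniform Hölder estimate
`|W(t+h) − W(t)| ≤ C |h|^{1/2}` for all `t` and `|h| ≤ 1`. -/
theorem weierstrass_uniform_half_holder :
    ∃ C : ℝ, ∀ t h : ℝ, |h| ≤ 1 → |W (t + h) - W t| ≤ C * |h| ^ (1 / 2 : ℝ) := by
  classical
  refine ⟨6, fun t h hh => ?_⟩
  rcases eq_or_ne h 0 with rfl | hne
  · simp [Real.zero_rpow (by norm_num : (1/2:ℝ) ≠ 0)]
  set a := |h| with ha_def
  have ha : 0 < a := abs_pos.mpr hne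
  set s := Real.sqrt a with hs_def
  have hs : 0 < s := Real.sqrt_pos.mpr ha
  have hs1 : s ≤ 1 := by
    rw [hs_def, show (1:ℝ) = Real.sqrt 1 by simp]
    exact Real.sqrt_le_sqrt hh
  have hsa : s * s = a := Real.mul_self_sqrt ha.le
  have hrw : a ^ (1/2 : ℝ) = s := (Real.sqrt_eq_rpow a).symm
  rw [hrw]
  set g : ℕ → ℝ := fun n => min ((2:ℝ)^(n+1) * a) (2 / 2^(n+1)) with hg_def
  have hgeo : Summable (fun n : ℕ => (2:ℝ) / 2^(n+1)) := by
    have heq : (fun n : ℕ => (2:ℝ)/2^(n+1)) = fun n => (1/2:ℝ)^n := by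
      funext n; rw [pow_succ]; field_simp; rw [← mul_pow]; norm_num
    rw [heq]; exact summable_geometric_of_lt_one (by norm_num) (by norm_num)
  have hg : Summable g := by
    apply Summable.of_nonneg_of_le _ _ hgeo
    · intro n; exact le_min (by positivity) (by positivity)
    · intro n; exact min_le_right _ _
  have key : ∀ n : ℕ, |Real.cos ((4:ℝ)^(n+1) * (t+h)) / 2^(n+1)
      - Real.cos ((4:ℝ)^(n+1) * t) / 2^(n+1)| ≤ g n := by
    intro n
    rw [div_sub_div_same, abs_div, abs_of_pos (pow_pos (by norm_num : (0:ℝ) < 2) _)]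
    refine le_min ?_ ?_
    · have h1 : |Real.cos ((4:ℝ)^(n+1)*(t+h)) - Real.cos ((4:ℝ)^(n+1)*t)| ≤ (4:ℝ)^(n+1) * a := by
        calc |Real.cos ((4:ℝ)^(n+1)*(t+h)) - Real.cos ((4:ℝ)^(n+1)*t)|
            ≤ |(4:ℝ)^(n+1)*(t+h) - (4:ℝ)^(n+1)*t| := _root_.abs_cos_sub_cos_le _ _
          _ = (4:ℝ)^(n+1) * a := by
              rw [show (4:ℝ)^(n+1)*(t+h) - (4:ℝ)^(n+1)*t = (4:ℝ)^(n+1)*h by ring,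
                abs_mul, abs_of_pos (pow_pos (by norm_num : (0:ℝ) < 4) _)]
      calc |Real.cos ((4:ℝ)^(n+1)*(t+h)) - Real.cos ((4:ℝ)^(n+1)*t)| / 2^(n+1)
          ≤ ((4:ℝ)^(n+1) * a) / 2^(n+1) := by gcongr
        _ = (2:ℝ)^(n+1) * a := by
            rw [show (4:ℝ)^(n+1) = 2^(n+1) * 2^(n+1) by rw [← mul_pow]; norm_num]
            field_simp
    · have h2 : |Real.cos ((4:ℝ)^(n+1)*(t+h)) - Real.cos ((4:ℝ)^(n+1)*t)| ≤ 2 := by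
        calc |Real.cos ((4:ℝ)^(n+1)*(t+h)) - Real.cos ((4:ℝ)^(n+1)*t)|
            ≤ |Real.cos ((4:ℝ)^(n+1)*(t+h))| + |Real.cos ((4:ℝ)^(n+1)*t)| := abs_sub _ _
          _ ≤ 1 + 1 := add_le_add (Real.abs_cos_le_one _) (Real.abs_cos_le_one _)
          _ = 2 := by norm_num
      gcongr
  unfold W
  rw [← Summable.tsum_sub (summable_W (t+h)) (summable_W t)]
  have habs : Summable (fun n : ℕ => |Real.cos ((4:ℝ)^(n+1) * (t+h)) / 2^(n+1)
      - Real.cos ((4:ℝ)^(n+1) * t) / 2^(n+1)|) :=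
    Summable.of_nonneg_of_le (fun n => abs_nonneg _) key hg
  have step1 : |∑' n : ℕ, (Real.cos ((4:ℝ)^(n+1) * (t+h)) / 2^(n+1)
      - Real.cos ((4:ℝ)^(n+1) * t) / 2^(n+1))| ≤ ∑' n, g n := by
    calc |∑' n : ℕ, (Real.cos ((4:ℝ)^(n+1) * (t+h)) / 2^(n+1)
        - Real.cos ((4:ℝ)^(n+1) * t) / 2^(n+1))|
        ≤ ∑' n : ℕ, |Real.cos ((4:ℝ)^(n+1) * (t+h)) / 2^(n+1)
          - Real.cos ((4:ℝ)^(n+1) * t) / 2^(n+1)| := by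
          simpa [Real.norm_eq_abs] using
            norm_tsum_le_tsum_norm (f := fun n : ℕ => Real.cos ((4:ℝ)^(n+1) * (t+h)) / 2^(n+1)
              - Real.cos ((4:ℝ)^(n+1) * t) / 2^(n+1)) (by simpa [Real.norm_eq_abs] using habs)
      _ ≤ ∑' n, g n := Summable.tsum_le_tsum key habs hg
  refine step1.trans ?_
  have hE : ∃ j : ℕ, (1/2:ℝ)^j < s := exists_pow_lt_of_lt_one hs (by norm_num)
  set k := Nat.find hE with hk_def
  have hk1 : (1/2:ℝ)^k < s := Nat.find_spec hE
  have hk2 : (2:ℝ)^k * s ≤ 2 := by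
    rcases Nat.eq_zero_or_pos k with h0 | hpos
    · rw [h0]; simpa using hs1.trans (by norm_num)
    · have hmin := Nat.find_min hE (Nat.sub_lt hpos one_pos)
      push_neg at hmin
      have hk' : k - 1 + 1 = k := Nat.succ_pred_eq_of_pos hpos
      calc (2:ℝ)^k * s ≤ 2^k * (1/2)^(k-1) :=
            mul_le_mul_of_nonneg_left hmin (by positivity)
        _ = 2 := by
            rw [← hk', pow_succ, Nat.add_sub_cancel, mul_comm ((2:ℝ)^(k-1)) 2, mul_assoc,
              ← mul_pow]
            norm_num
  rw [← Summable.sum_add_tsum_nat_add k hg]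
  have head : ∑ i ∈ Finset.range k, g i ≤ 4 * s := by
    calc ∑ i ∈ Finset.range k, g i ≤ ∑ i ∈ Finset.range k, (2:ℝ)^(i+1) * a :=
          Finset.sum_le_sum fun i _ => min_le_left _ _
      _ = (∑ i ∈ Finset.range k, (2:ℝ)^(i+1)) * a := (Finset.sum_mul _ _ _).symm
      _ ≤ 2^(k+1) * a := mul_le_mul_of_nonneg_right (aux_pow_sum k) ha.le
      _ = 2 * (2^k * s) * s := by rw [← hsa]; ring
      _ ≤ 2 * 2 * s := mul_le_mul_of_nonneg_right (by nlinarith) hs.le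
      _ = 4 * s := by ring
  have tail : ∑' n : ℕ, g (n + k) ≤ 2 * s := by
    have h1 : ∀ n : ℕ, g (n + k) ≤ (1/2:ℝ)^k * (1/2)^n := by
      intro n
      refine (min_le_right _ _).trans (le_of_eq ?_)
      rw [div_eq_iff (by positivity), one_div, inv_pow, inv_pow, pow_add, pow_succ]
      field_simp
      ring
    have h2 : Summable (fun n : ℕ => (1/2:ℝ)^k * (1/2)^n) :=
      (summable_geometric_of_lt_one (by norm_num) (by norm_num)).mul_left _
    calc ∑' n : ℕ, g (n + k) ≤ ∑' n : ℕ, (1/2:ℝ)^k * (1/2)^n :=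
          Summable.tsum_le_tsum h1 ((summable_nat_add_iff k).mpr hg) h2
      _ = (1/2:ℝ)^k * 2 := by rw [tsum_mul_left, tsum_geometric_two]
      _ ≤ s * 2 := mul_le_mul_of_nonneg_right hk1.le (by norm_num)
      _ = 2 * s := by ring
  linarith
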